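/- Let m ∈ ℕ, let f : ℝ → ℝ be of class C^{m+1} with bounded support, and let ε > 0 be real. Set λ(ε) := 8·(‖f‖_{m+1}/ε)²·log⁺(2√2·‖f‖_m/ε). Then for every real λ > λ(ε), the Weierstrass transform f_λ satisfies ‖f_λ − f‖_m ≤ ε. In particular, ‖f_λ − f‖_m ≤ ε whenever λ ≥ 16√2·(‖f‖_{m+1}/ε)³ + 1. -/

import Mathlib

open Real Set MeasureTheory Filter Topology
open scoped Convolution

/-- The (generalized) Weierstrass transform with parameter `l > 0`:
`f_l(t) = (l/π)^{1/2} ∫ f(s)·e^{−l(s−t)²} ds`. -/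
noncomputable def weierstrassTransform (l : ℝ) (f : ℝ → ℝ) (t : ℝ) : ℝ :=
  Real.sqrt (l / Real.pi) * ∫ s : ℝ, f s * Real.exp (-l * (s - t) ^ 2)

/-- `‖f‖_m = max_{k ≤ m} sup_t |f⁽ᵏ⁾(t)|`. -/
noncomputable def cNorm (f : ℝ → ℝ) (m : ℕ) : ℝ :=
  sSup {y : ℝ | ∃ k : ℕ, k ≤ m ∧ ∃ t : ℝ, y = |iteratedDeriv k f t|}

namespace WeierstrassAux

lemma gaussK_integrable {l : ℝ} (hl : 0 < l) (t : ℝ) :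
    Integrable (fun s : ℝ => Real.exp (-l * (s - t) ^ 2)) :=
  (integrable_exp_neg_mul_sq hl).comp_sub_right t

lemma gaussK_integral {l : ℝ} (hl : 0 < l) (t : ℝ) :
    ∫ s : ℝ, Real.exp (-l * (s - t) ^ 2) = Real.sqrt (Real.pi / l) := by
  rw [show (fun s : ℝ => Real.exp (-l * (s - t) ^ 2))
      = fun s : ℝ => (fun u : ℝ => Real.exp (-l * u ^ 2)) (s - t) from rfl,
    integral_sub_right_eq_self (fun u : ℝ => Real.exp (-l * u ^ 2)) t]
  exact integral_gaussian l

lemma sqrt_lpi_eq {l : ℝ} (hl : 0 < l) :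
    Real.sqrt (l / Real.pi) = l / Real.sqrt (Real.pi * l) := by
  rw [Real.sqrt_div hl.le, Real.sqrt_mul Real.pi_pos.le,
    show l / (Real.sqrt Real.pi * Real.sqrt l) = l / Real.sqrt l / Real.sqrt Real.pi by ring,
    Real.div_sqrt]

lemma sqrt_pil_eq {l : ℝ} (hl : 0 < l) :
    Real.sqrt (Real.pi / l) = Real.sqrt (Real.pi * l) / l := by
  rw [Real.sqrt_div Real.pi_pos.le, Real.sqrt_mul Real.pi_pos.le,
    show Real.sqrt Real.pi * Real.sqrt l / l = Real.sqrt Real.pi * (Real.sqrt l / l) by ring,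
    Real.sqrt_div_self', mul_one_div]

lemma sqrt_mul_sqrt_inv {l : ℝ} (hl : 0 < l) :
    Real.sqrt (l / Real.pi) * Real.sqrt (Real.pi / l) = 1 := by
  have h1 : l / Real.pi ≥ 0 := by positivity
  rw [← Real.sqrt_mul h1, show l / Real.pi * (Real.pi / l) = 1 by
    field_simp]
  exact Real.sqrt_one

/-- The transform of a bounded function is bounded by the same constant. -/
lemma weierstrass_abs_le {l M : ℝ} (hl : 0 < l) {g : ℝ → ℝ} (hgc : Continuous g)
    (hM : ∀ x, |g x| ≤ M) (t : ℝ) : |weierstrassTransform l g t| ≤ M := by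
  have hK := gaussK_integrable hl t
  have hKM : Integrable (fun s : ℝ => M * Real.exp (-l * (s - t) ^ 2)) := hK.const_mul M
  have hintg : Integrable (fun s : ℝ => g s * Real.exp (-l * (s - t) ^ 2)) :=
    hK.bdd_mul hgc.aestronglyMeasurable (c := M) (Filter.Eventually.of_forall fun x => by simpa [Real.norm_eq_abs] using hM x)
  have h1 : |∫ s : ℝ, g s * Real.exp (-l * (s - t) ^ 2)| ≤ M * Real.sqrt (Real.pi / l) := by
    calc |∫ s : ℝ, g s * Real.exp (-l * (s - t) ^ 2)|
        = ‖∫ s : ℝ, g s * Real.exp (-l * (s - t) ^ 2)‖ := (Real.norm_eq_abs _).symm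
      _ ≤ ∫ s : ℝ, ‖g s * Real.exp (-l * (s - t) ^ 2)‖ := norm_integral_le_integral_norm _
      _ ≤ ∫ s : ℝ, M * Real.exp (-l * (s - t) ^ 2) := by
          refine integral_mono hintg.norm hKM fun s => ?_
          rw [norm_mul, Real.norm_eq_abs, Real.norm_eq_abs,
            abs_of_nonneg (Real.exp_pos _).le]
          exact mul_le_mul_of_nonneg_right (hM s) (Real.exp_pos _).le
      _ = M * Real.sqrt (Real.pi / l) := by rw [integral_const_mul, gaussK_integral hl]
  calc |weierstrassTransform l g t|
      = Real.sqrt (l / Real.pi) * |∫ s : ℝ, g s * Real.exp (-l * (s - t) ^ 2)| := by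
        rw [weierstrassTransform, abs_mul, abs_of_nonneg (Real.sqrt_nonneg _)]
    _ ≤ Real.sqrt (l / Real.pi) * (M * Real.sqrt (Real.pi / l)) :=
        mul_le_mul_of_nonneg_left h1 (Real.sqrt_nonneg _)
    _ = M * (Real.sqrt (l / Real.pi) * Real.sqrt (Real.pi / l)) := by ring
    _ = M := by rw [sqrt_mul_sqrt_inv hl, mul_one]

/-- Antiderivative facts for the gaussian tail integral, right side. -/
lemma tail_integral_right {l δ : ℝ} (hl : 0 < l) (hδ : 0 < δ) (t : ℝ) :
    ∫ x in Ioi (t + δ), (x - t) * Real.exp (-l * (x - t) ^ 2)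
      = Real.exp (-(l * δ ^ 2)) / (2 * l) := by
  have hF : ∀ x : ℝ, HasDerivAt (fun x : ℝ => -Real.exp (-l * (x - t) ^ 2) / (2 * l))
      ((x - t) * Real.exp (-l * (x - t) ^ 2)) x := by
    intro x
    have h0 : HasDerivAt (fun x : ℝ => x - t) 1 x := (hasDerivAt_id x).sub_const t
    have h1 : HasDerivAt (fun x : ℝ => -l * (x - t) ^ 2) (-l * (2 * (x - t))) x := by
      simpa using ((h0.pow 2).const_mul (-l))
    have h2 := h1.exp
    have h3 := h2.neg.div_const (2 * l)
    refine h3.congr_deriv ?_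
    rw [eq_comm, eq_div_iff (by positivity : (2 * l : ℝ) ≠ 0)]
    ring
  have hint : Integrable (fun x : ℝ => (x - t) * Real.exp (-l * (x - t) ^ 2)) := by
    have := (integrable_mul_exp_neg_mul_sq hl).comp_sub_right t
    simpa using this
  have htend : Tendsto (fun x : ℝ => -Real.exp (-l * (x - t) ^ 2) / (2 * l)) atTop (𝓝 0) := by
    have ht1 : Tendsto (fun x : ℝ => (x - t) ^ 2) atTop atTop := by
      have ha : Tendsto (fun x : ℝ => x + -t) atTop atTop :=
        tendsto_atTop_add_const_right _ (-t) tendsto_id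
      have hb : Tendsto (fun y : ℝ => y ^ 2) atTop atTop := tendsto_pow_atTop (by norm_num)
      refine (hb.comp ha).congr fun x => ?_
      simp only [Function.comp]
      ring
    have ht2 : Tendsto (fun x : ℝ => -l * (x - t) ^ 2) atTop atBot := by
      refine (tendsto_neg_atTop_atBot.comp (ht1.const_mul_atTop hl)).congr fun x => ?_
      simp [neg_mul]
    have ht3 := Real.tendsto_exp_atBot.comp ht2
    have ht4 := (ht3.neg).div_const (2 * l)
    simpa using ht4
  have := integral_Ioi_of_hasDerivAt_of_tendsto' (a := t + δ) (fun x _ => hF x)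
    hint.integrableOn htend
  rw [this]
  have : t + δ - t = δ := by ring
  rw [this, neg_mul]
  ring

/-- Antiderivative facts for the gaussian tail integral, left side. -/
lemma tail_integral_left {l δ : ℝ} (hl : 0 < l) (hδ : 0 < δ) (t : ℝ) :
    ∫ x in Iic (t - δ), (t - x) * Real.exp (-l * (x - t) ^ 2)
      = Real.exp (-(l * δ ^ 2)) / (2 * l) := by
  have hF : ∀ x : ℝ, HasDerivAt (fun x : ℝ => Real.exp (-l * (x - t) ^ 2) / (2 * l))
      ((t - x) * Real.exp (-l * (x - t) ^ 2)) x := by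
    intro x
    have h0 : HasDerivAt (fun x : ℝ => x - t) 1 x := (hasDerivAt_id x).sub_const t
    have h1 : HasDerivAt (fun x : ℝ => -l * (x - t) ^ 2) (-l * (2 * (x - t))) x := by
      simpa using ((h0.pow 2).const_mul (-l))
    have h2 := h1.exp
    have h3 := h2.div_const (2 * l)
    refine h3.congr_deriv ?_
    rw [eq_comm, eq_div_iff (by positivity : (2 * l : ℝ) ≠ 0)]
    ring
  have hint : Integrable (fun x : ℝ => (t - x) * Real.exp (-l * (x - t) ^ 2)) := by
    have h := ((integrable_mul_exp_neg_mul_sq hl).comp_sub_right t).neg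
    refine h.congr (Filter.Eventually.of_forall fun x => ?_)
    simp only [Pi.neg_apply]
    ring
  have htend : Tendsto (fun x : ℝ => Real.exp (-l * (x - t) ^ 2) / (2 * l)) atBot (𝓝 0) := by
    have ht1 : Tendsto (fun x : ℝ => (x - t) ^ 2) atBot atTop := by
      have ha : Tendsto (fun x : ℝ => -x + t) atBot atTop :=
        tendsto_atTop_add_const_right _ t tendsto_neg_atBot_atTop
      have hb : Tendsto (fun y : ℝ => y ^ 2) atTop atTop := tendsto_pow_atTop (by norm_num)
      refine (hb.comp ha).congr fun x => ?_
      simp only [Function.comp]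
      ring
    have ht2 : Tendsto (fun x : ℝ => -l * (x - t) ^ 2) atBot atBot := by
      refine (tendsto_neg_atTop_atBot.comp (ht1.const_mul_atTop hl)).congr fun x => ?_
      simp [neg_mul]
    have ht3 := Real.tendsto_exp_atBot.comp ht2
    have ht4 := ht3.div_const (2 * l)
    simpa using ht4
  have := integral_Iic_of_hasDerivAt_of_tendsto' (a := t - δ) (fun x _ => hF x)
    hint.integrableOn htend
  rw [this]
  have : t - δ - t = -δ := by ring
  rw [this]
  have : (-δ : ℝ) ^ 2 = δ ^ 2 := by ring
  rw [this, neg_mul]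
  ring

/-- The key quantitative estimate. -/
lemma key_estimate {l δ M N : ℝ} (hl : 0 < l) (hδ : 0 < δ)
    {g : ℝ → ℝ} (hgd : Differentiable ℝ g)
    (hM : ∀ x, |g x| ≤ M) (hN : ∀ x, |deriv g x| ≤ N) (t : ℝ) :
    |weierstrassTransform l g t - g t| ≤
      N * δ + 2 * M * Real.exp (-(l * δ ^ 2)) / (Real.sqrt (Real.pi * l) * δ) := by
  have hgc : Continuous g := hgd.continuous
  have hM0 : 0 ≤ M := (abs_nonneg _).trans (hM 0)
  have hN0 : 0 ≤ N := (abs_nonneg _).trans (hN 0)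
  set K : ℝ → ℝ := fun s => Real.exp (-l * (s - t) ^ 2) with hKdef
  have hKnn : ∀ s, 0 ≤ K s := fun s => (Real.exp_pos _).le
  have hK : Integrable K := gaussK_integrable hl t
  have hintg : Integrable (fun s : ℝ => g s * K s) :=
    hK.bdd_mul hgc.aestronglyMeasurable (c := M) (Filter.Eventually.of_forall fun x => by simpa [Real.norm_eq_abs] using hM x)
  have hintsub : Integrable (fun s : ℝ => (g s - g t) * K s) := by
    refine ((hintg.sub (hK.const_mul (g t))).congr (Filter.Eventually.of_forall fun s => ?_))
    simp only [Pi.sub_apply]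
    ring
  -- Lipschitz estimate
  have hlip : ∀ s, |g s - g t| ≤ N * |s - t| := by
    intro s
    have := convex_univ.norm_image_sub_le_of_norm_deriv_le (𝕜 := ℝ)
      (fun x _ => (hgd x)) (fun x _ => by simpa [Real.norm_eq_abs] using hN x)
      (mem_univ t) (mem_univ s)
    simpa [Real.norm_eq_abs] using this
  -- bound for |g s - g t| by 2M
  have h2M : ∀ s, |g s - g t| ≤ 2 * M := by
    intro s
    calc |g s - g t| ≤ |g s| + |g t| := abs_sub _ _
      _ ≤ M + M := add_le_add (hM s) (hM t)
      _ = 2 * M := by ring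
  -- the majorant
  set φm : ℝ → ℝ := fun s => (t - s) / δ * K s with hφmdef
  set φp : ℝ → ℝ := fun s => (s - t) / δ * K s with hφpdef
  set ψ : ℝ → ℝ := fun s =>
    N * δ * K s + 2 * M * ((Iic (t - δ)).indicator φm s + (Ici (t + δ)).indicator φp s)
    with hψdef
  have hintmul : Integrable (fun s : ℝ => (s - t) * K s) :=
    (integrable_mul_exp_neg_mul_sq hl).comp_sub_right t
  have hφp_int : Integrable φp := by
    refine (hintmul.const_mul (1 / δ)).congr (Filter.Eventually.of_forall fun s => ?_)
    simp only [hφpdef]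
    ring
  have hφm_int : Integrable φm := by
    refine (hintmul.const_mul (-(1 / δ))).congr (Filter.Eventually.of_forall fun s => ?_)
    simp only [hφmdef]
    ring
  have hψ_int : Integrable ψ := by
    refine ((hK.const_mul (N * δ)).add (((hφm_int.indicator measurableSet_Iic).add
      (hφp_int.indicator measurableSet_Ici)).const_mul (2 * M)))
  -- pointwise bound
  have hpt : ∀ s, |(g s - g t) * K s| ≤ ψ s := by
    intro s
    have hKs := hKnn s
    have hindm_nn : 0 ≤ (Iic (t - δ)).indicator φm s := by
      refine Set.indicator_nonneg (fun x hx => ?_) s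
      have : x ≤ t - δ := hx
      have h1 : 0 ≤ (t - x) / δ := div_nonneg (by linarith) hδ.le
      exact mul_nonneg h1 (hKnn x)
    have hindp_nn : 0 ≤ (Ici (t + δ)).indicator φp s := by
      refine Set.indicator_nonneg (fun x hx => ?_) s
      have : t + δ ≤ x := hx
      have h1 : 0 ≤ (x - t) / δ := div_nonneg (by linarith) hδ.le
      exact mul_nonneg h1 (hKnn x)
    have hNδK : 0 ≤ N * δ * K s := by positivity
    rw [abs_mul, abs_of_nonneg hKs]
    rcases le_or_gt s (t - δ) with h1 | h1
    · have hKφ : K s ≤ φm s := by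
        have h1' : (1 : ℝ) ≤ (t - s) / δ := (one_le_div hδ).mpr (by linarith)
        simpa [hφmdef] using le_mul_of_one_le_left hKs h1'
      have hmem : s ∈ Iic (t - δ) := h1
      have : |g s - g t| * K s ≤ 2 * M * φm s := by
        calc |g s - g t| * K s ≤ 2 * M * K s := mul_le_mul_of_nonneg_right (h2M s) hKs
          _ ≤ 2 * M * φm s := mul_le_mul_of_nonneg_left hKφ (by positivity)
      simp only [hψdef]
      rw [Set.indicator_of_mem hmem]
      nlinarith [hindp_nn]
    rcases le_or_gt (t + δ) s with h2 | h2
    · have hKφ : K s ≤ φp s := by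
        have h2' : (1 : ℝ) ≤ (s - t) / δ := (one_le_div hδ).mpr (by linarith)
        simpa [hφpdef] using le_mul_of_one_le_left hKs h2'
      have hmem : s ∈ Ici (t + δ) := h2
      have : |g s - g t| * K s ≤ 2 * M * φp s := by
        calc |g s - g t| * K s ≤ 2 * M * K s := mul_le_mul_of_nonneg_right (h2M s) hKs
          _ ≤ 2 * M * φp s := mul_le_mul_of_nonneg_left hKφ (by positivity)
      simp only [hψdef]
      rw [Set.indicator_of_mem hmem]
      nlinarith [hindm_nn]
    · -- |s - t| ≤ δ
      have habs : |s - t| ≤ δ := abs_le.mpr ⟨by linarith, by linarith⟩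
      have : |g s - g t| * K s ≤ N * δ * K s := by
        refine mul_le_mul_of_nonneg_right ?_ hKs
        calc |g s - g t| ≤ N * |s - t| := hlip s
          _ ≤ N * δ := mul_le_mul_of_nonneg_left habs hN0
      simp only [hψdef]
      nlinarith [hindm_nn, hindp_nn]
  -- difference formula
  have hdiff : weierstrassTransform l g t - g t
      = Real.sqrt (l / Real.pi) * ∫ s : ℝ, (g s - g t) * K s := by
    have h1 : ∫ s : ℝ, (g s - g t) * K s
        = (∫ s : ℝ, g s * K s) - g t * ∫ s : ℝ, K s := by
      rw [← integral_const_mul]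
      rw [← integral_sub hintg (hK.const_mul (g t))]
      refine integral_congr_ae (Filter.Eventually.of_forall fun s => ?_)
      simp only
      ring
    rw [h1, gaussK_integral hl, mul_sub, weierstrassTransform]
    have h2 : Real.sqrt (l / Real.pi) * (g t * Real.sqrt (Real.pi / l)) = g t := by
      rw [show Real.sqrt (l / Real.pi) * (g t * Real.sqrt (Real.pi / l))
          = g t * (Real.sqrt (l / Real.pi) * Real.sqrt (Real.pi / l)) by ring,
        sqrt_mul_sqrt_inv hl, mul_one]
    rw [h2]
  -- integral of the majorant
  have hψ_val : ∫ s : ℝ, ψ s = N * δ * Real.sqrt (Real.pi / l)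
      + 2 * M * (Real.exp (-(l * δ ^ 2)) / (2 * l) / δ + Real.exp (-(l * δ ^ 2)) / (2 * l) / δ) := by
    have e1 : ∫ s : ℝ, N * δ * K s = N * δ * Real.sqrt (Real.pi / l) := by
      rw [integral_const_mul, gaussK_integral hl]
    have e2 : ∫ s : ℝ, (Iic (t - δ)).indicator φm s = Real.exp (-(l * δ ^ 2)) / (2 * l) / δ := by
      rw [integral_indicator measurableSet_Iic]
      have : ∫ s in Iic (t - δ), φm s = (1 / δ) * ∫ s in Iic (t - δ), (t - s) * K s := by
        rw [← integral_const_mul]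
        refine integral_congr_ae (Filter.Eventually.of_forall fun s => ?_)
        simp only [hφmdef]
        ring
      rw [this, tail_integral_left hl hδ t]
      ring
    have e3 : ∫ s : ℝ, (Ici (t + δ)).indicator φp s = Real.exp (-(l * δ ^ 2)) / (2 * l) / δ := by
      rw [integral_indicator measurableSet_Ici, integral_Ici_eq_integral_Ioi]
      have : ∫ s in Ioi (t + δ), φp s = (1 / δ) * ∫ s in Ioi (t + δ), (s - t) * K s := by
        rw [← integral_const_mul]
        refine integral_congr_ae (Filter.Eventually.of_forall fun s => ?_)
        simp only [hφpdef]
        ring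
      rw [this, tail_integral_right hl hδ t]
      ring
    have hA : Integrable (fun s : ℝ => N * δ * K s) := hK.const_mul _
    have hB0 : Integrable
        (fun s : ℝ => (Iic (t - δ)).indicator φm s + (Ici (t + δ)).indicator φp s) :=
      (hφm_int.indicator measurableSet_Iic).add (hφp_int.indicator measurableSet_Ici)
    have hB : Integrable (fun s : ℝ =>
        2 * M * ((Iic (t - δ)).indicator φm s + (Ici (t + δ)).indicator φp s)) :=
      hB0.const_mul _
    simp only [hψdef]
    rw [integral_add hA hB, integral_const_mul (2 * M),
      integral_add (hφm_int.indicator measurableSet_Iic) (hφp_int.indicator measurableSet_Ici),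
      e1, e2, e3]
  -- put everything together
  have hmain : |weierstrassTransform l g t - g t| ≤ Real.sqrt (l / Real.pi) * ∫ s : ℝ, ψ s := by
    rw [hdiff, abs_mul, abs_of_nonneg (Real.sqrt_nonneg _)]
    refine mul_le_mul_of_nonneg_left ?_ (Real.sqrt_nonneg _)
    calc |∫ s : ℝ, (g s - g t) * K s|
        = ‖∫ s : ℝ, (g s - g t) * K s‖ := (Real.norm_eq_abs _).symm
      _ ≤ ∫ s : ℝ, ‖(g s - g t) * K s‖ := norm_integral_le_integral_norm _
      _ = ∫ s : ℝ, |(g s - g t) * K s| := by simp only [Real.norm_eq_abs]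
      _ ≤ ∫ s : ℝ, ψ s := integral_mono hintsub.abs hψ_int hpt
  refine hmain.trans ?_
  rw [hψ_val]
  apply le_of_eq
  have hS : 0 < Real.sqrt (Real.pi * l) := Real.sqrt_pos.2 (by positivity)
  rw [sqrt_lpi_eq hl, sqrt_pil_eq hl]
  have hl' : (l : ℝ) ≠ 0 := hl.ne'
  have hS' : Real.sqrt (Real.pi * l) ≠ 0 := hS.ne'
  have hδ' : δ ≠ 0 := hδ.ne'
  field_simp
  ring


/-- The Weierstrass transform as a convolution with the gaussian kernel. -/
lemma W_eq_conv (l : ℝ) (g : ℝ → ℝ) :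
    weierstrassTransform l g = fun t =>
      Real.sqrt (l / Real.pi) *
        ((fun u : ℝ => Real.exp (-l * u ^ 2)) ⋆[ContinuousLinearMap.mul ℝ ℝ] g) t := by
  funext t
  rw [weierstrassTransform, convolution_mul_swap]
  congr 1
  refine integral_congr_ae (Filter.Eventually.of_forall fun s => ?_)
  simp only
  rw [show (s - t) ^ 2 = (t - s) ^ 2 by ring]
  ring

/-- Differentiation commutes with the Weierstrass transform. -/
lemma deriv_W {l : ℝ} (hl : 0 < l) {g : ℝ → ℝ} (hg : ContDiff ℝ 1 g)
    (hgs : HasCompactSupport g) :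
    deriv (weierstrassTransform l g) = weierstrassTransform l (deriv g) := by
  have hK : LocallyIntegrable (fun u : ℝ => Real.exp (-l * u ^ 2)) volume :=
    (integrable_exp_neg_mul_sq hl).locallyIntegrable
  funext x
  have h1 := hgs.hasDerivAt_convolution_right (ContinuousLinearMap.mul ℝ ℝ) hK hg x
  have h2 := h1.const_mul (Real.sqrt (l / Real.pi))
  rw [W_eq_conv l g, W_eq_conv l (deriv g)]
  exact h2.deriv

/-- Iterated differentiation commutes with the Weierstrass transform. -/
lemma iter_W {l : ℝ} (hl : 0 < l) :
    ∀ (k : ℕ) (g : ℝ → ℝ), ContDiff ℝ k g → HasCompactSupport g →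
      iteratedDeriv k (weierstrassTransform l g) = weierstrassTransform l (iteratedDeriv k g) := by
  intro k
  induction k with
  | zero => intro g _ _; simp [iteratedDeriv_zero]
  | succ n ih =>
    intro g hg hgs
    have hg1 : ContDiff ℝ 1 g := hg.of_le (by exact_mod_cast n.succ_pos)
    have hg' : ContDiff ℝ ((n : WithTop ℕ∞) + 1) g := by exact_mod_cast hg
    have hgd : ContDiff ℝ n (deriv g) := (contDiff_succ_iff_deriv.mp hg').2.2
    rw [iteratedDeriv_succ', iteratedDeriv_succ', deriv_W hl hg1 hgs]
    exact ih (deriv g) hgd hgs.deriv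

/-- compact support of iterated derivatives -/
lemma iter_support {f : ℝ → ℝ} (hsupp : HasCompactSupport f) (k : ℕ) :
    HasCompactSupport (iteratedDeriv k f) := by
  induction k with
  | zero => simpa using hsupp
  | succ n ih => rw [iteratedDeriv_succ]; exact ih.deriv

lemma bddAbove_S (f : ℝ → ℝ) (n : ℕ)
    (h : ∀ k ≤ n, ∃ C, ∀ t, |iteratedDeriv k f t| ≤ C) :
    BddAbove {y : ℝ | ∃ k : ℕ, k ≤ n ∧ ∃ t : ℝ, y = |iteratedDeriv k f t|} := by
  induction n with
  | zero =>
    obtain ⟨C, hC⟩ := h 0 le_rfl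
    refine ⟨C, ?_⟩
    rintro y ⟨k, hk, t, rfl⟩
    obtain rfl : k = 0 := Nat.le_zero.mp hk
    exact hC t
  | succ n ih =>
    obtain ⟨C1, hC1⟩ := ih (fun k hk => h k (hk.trans n.le_succ))
    obtain ⟨C2, hC2⟩ := h (n + 1) le_rfl
    refine ⟨max C1 C2, ?_⟩
    rintro y ⟨k, hk, t, rfl⟩
    rcases eq_or_lt_of_le hk with rfl | hlt
    · exact le_trans (hC2 t) (le_max_right _ _)
    · exact le_trans (hC1 ⟨k, Nat.lt_succ_iff.mp hlt, t, rfl⟩) (le_max_left _ _)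

end WeierstrassAux

set_option maxHeartbeats 1000000 in
theorem weierstrass_transform_approximation
    (m : ℕ) (f : ℝ → ℝ) (hf : ContDiff ℝ (m + 1) f)
    (hsupp : HasCompactSupport f) (ε : ℝ) (hε : 0 < ε) :
    (∀ l : ℝ,
      8 * (cNorm f (m + 1) / ε) ^ 2 *
          max 0 (Real.log (2 * Real.sqrt 2 * cNorm f m / ε)) < l →
      ∀ k : ℕ, k ≤ m → ∀ t : ℝ,
        |iteratedDeriv k (weierstrassTransform l f) t - iteratedDeriv k f t| ≤ ε) ∧
    (∀ l : ℝ, 16 * Real.sqrt 2 * (cNorm f (m + 1) / ε) ^ 3 + 1 ≤ l →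
      ∀ k : ℕ, k ≤ m → ∀ t : ℝ,
        |iteratedDeriv k (weierstrassTransform l f) t - iteratedDeriv k f t| ≤ ε) := by
  classical
  set N := cNorm f (m + 1) with hNdef
  set M := cNorm f m with hMdef
  have hconts : ∀ k, k ≤ m + 1 → Continuous (iteratedDeriv k f) := fun k hk =>
    hf.continuous_iteratedDeriv k (by exact_mod_cast hk)
  have hsupps : ∀ k, HasCompactSupport (iteratedDeriv k f) :=
    WeierstrassAux.iter_support hsupp
  have hboundEx : ∀ k, k ≤ m + 1 → ∃ C, ∀ t, |iteratedDeriv k f t| ≤ C := by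
    intro k hk
    obtain ⟨C, hC⟩ := (hconts k hk).bounded_above_of_compact_support (hsupps k)
    exact ⟨C, fun t => by simpa [Real.norm_eq_abs] using hC t⟩
  have hbddN : BddAbove {y : ℝ | ∃ k : ℕ, k ≤ m + 1 ∧ ∃ t : ℝ, y = |iteratedDeriv k f t|} :=
    WeierstrassAux.bddAbove_S f (m + 1) hboundEx
  have hbddM : BddAbove {y : ℝ | ∃ k : ℕ, k ≤ m ∧ ∃ t : ℝ, y = |iteratedDeriv k f t|} :=
    WeierstrassAux.bddAbove_S f m (fun k hk => hboundEx k (hk.trans (Nat.le_succ m)))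
  have habsM : ∀ k, k ≤ m → ∀ t, |iteratedDeriv k f t| ≤ M := fun k hk t =>
    le_csSup hbddM ⟨k, hk, t, rfl⟩
  have habsN : ∀ k, k ≤ m + 1 → ∀ t, |iteratedDeriv k f t| ≤ N := fun k hk t =>
    le_csSup hbddN ⟨k, hk, t, rfl⟩
  have hM0 : 0 ≤ M := (abs_nonneg _).trans (habsM 0 (Nat.zero_le m) 0)
  have hN0 : 0 ≤ N := (abs_nonneg _).trans (habsN 0 (Nat.zero_le _) 0)
  have hMN : M ≤ N := by
    refine csSup_le_csSup hbddN ⟨|iteratedDeriv 0 f 0|, 0, Nat.zero_le m, 0, rfl⟩ ?_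
    rintro y ⟨k, hk, t, hy⟩
    exact ⟨k, hk.trans (Nat.le_succ m), t, hy⟩
  have main : ∀ l : ℝ,
      8 * (N / ε) ^ 2 * max 0 (Real.log (2 * Real.sqrt 2 * M / ε)) < l →
      ∀ k : ℕ, k ≤ m → ∀ t : ℝ,
        |iteratedDeriv k (weierstrassTransform l f) t - iteratedDeriv k f t| ≤ ε := by
    intro l hll k hk t
    have hlam0 : 0 ≤ 8 * (N / ε) ^ 2 * max 0 (Real.log (2 * Real.sqrt 2 * M / ε)) := by
      positivity
    have hl : 0 < l := lt_of_le_of_lt hlam0 hll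
    set g := iteratedDeriv k f with hgdef
    have hiter : iteratedDeriv k (weierstrassTransform l f) = weierstrassTransform l g :=
      WeierstrassAux.iter_W hl k f (hf.of_le (by exact_mod_cast hk.trans (Nat.le_succ m))) hsupp
    rw [hiter]
    have hgM : ∀ x, |g x| ≤ M := habsM k hk
    have hgd : Differentiable ℝ g :=
      hf.differentiable_iteratedDeriv k (by exact_mod_cast Nat.lt_succ_of_le hk)
    have hgderiv : ∀ x, |deriv g x| ≤ N := by
      intro x
      have hd : deriv g = iteratedDeriv (k + 1) f := (iteratedDeriv_succ).symm
      rw [hd]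
      exact habsN (k + 1) (Nat.succ_le_succ hk) x
    have hgc : Continuous g := hgd.continuous
    rcases le_or_gt (2 * M) ε with hcase | hcase
    · calc |weierstrassTransform l g t - g t|
          ≤ |weierstrassTransform l g t| + |g t| := abs_sub _ _
        _ ≤ M + M :=
            add_le_add (WeierstrassAux.weierstrass_abs_le hl hgc hgM t) (hgM t)
        _ = 2 * M := by ring
        _ ≤ ε := hcase
    · have hMpos : 0 < M := by linarith
      have hNpos : 0 < N := lt_of_lt_of_le hMpos hMN
      set δ := ε / (2 * N) with hδdef
      have hδ : 0 < δ := by positivity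
      have hs2 : (1 : ℝ) < Real.sqrt 2 := by
        rw [show (1 : ℝ) = Real.sqrt 1 by simp]
        exact Real.sqrt_lt_sqrt (by norm_num) (by norm_num)
      have h2Me : (1 : ℝ) < 2 * M / ε := (one_lt_div hε).mpr hcase
      have hargeq : 2 * Real.sqrt 2 * M / ε = Real.sqrt 2 * (2 * M / ε) := by ring
      have harg : (1 : ℝ) < 2 * Real.sqrt 2 * M / ε := by
        rw [hargeq]
        exact one_lt_mul hs2.le h2Me
      have hargpos : (0 : ℝ) < 2 * Real.sqrt 2 * M / ε := lt_trans one_pos harg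
      set L := Real.log (2 * Real.sqrt 2 * M / ε) with hLdef
      have hL : 0 < L := Real.log_pos harg
      have hmax : max 0 L = L := max_eq_right hL.le
      rw [hmax] at hll
      -- l * δ ^ 2 > 2 * L
      have hδsq : 8 * (N / ε) ^ 2 * L * δ ^ 2 = 2 * L := by
        rw [hδdef]
        field_simp
        ring
      have hld2 : 2 * L < l * δ ^ 2 := by
        calc 2 * L = 8 * (N / ε) ^ 2 * L * δ ^ 2 := hδsq.symm
          _ < l * δ ^ 2 := by
              exact mul_lt_mul_of_pos_right hll (by positivity)
      -- exp bound
      have hexpL : Real.exp L = 2 * Real.sqrt 2 * M / ε := Real.exp_log hargpos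
      have hsq2 : Real.sqrt 2 ^ 2 = 2 := Real.sq_sqrt (by norm_num)
      have hexp2L : Real.exp (2 * L) = 8 * M ^ 2 / ε ^ 2 := by
        rw [two_mul, Real.exp_add, hexpL]
        rw [show 2 * Real.sqrt 2 * M / ε * (2 * Real.sqrt 2 * M / ε)
            = 4 * Real.sqrt 2 ^ 2 * M ^ 2 / ε ^ 2 by ring, hsq2]
        ring
      have hexp : Real.exp (-(l * δ ^ 2)) ≤ ε ^ 2 / (8 * M ^ 2) := by
        have h1 : Real.exp (-(l * δ ^ 2)) ≤ Real.exp (-(2 * L)) :=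
          Real.exp_le_exp.mpr (by linarith)
        have h2 : Real.exp (-(2 * L)) = ε ^ 2 / (8 * M ^ 2) := by
          rw [Real.exp_neg, hexp2L]
          rw [inv_div]
        linarith
      -- sqrt(pi*l)*δ ≥ 1
      have hLlow : Real.log 2 / 2 ≤ L := by
        rw [hLdef, hargeq]
        have h1 : Real.sqrt 2 ≤ Real.sqrt 2 * (2 * M / ε) :=
          le_mul_of_one_le_right (by positivity) h2Me.le
        have h2 : Real.log (Real.sqrt 2) ≤ Real.log (Real.sqrt 2 * (2 * M / ε)) :=
          Real.log_le_log (by positivity) h1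
        rw [Real.log_sqrt (by norm_num)] at h2
        exact h2
      have hpld : (1 : ℝ) ≤ Real.pi * l * δ ^ 2 := by
        have hl2 : Real.log 2 ≤ l * δ ^ 2 := by linarith
        have hld2pos : (0 : ℝ) < l * δ ^ 2 := by positivity
        have e1 : (1 : ℝ) ≤ 3 * Real.log 2 := by linarith [Real.log_two_gt_d9]
        have e3 : 3 * (l * δ ^ 2) ≤ Real.pi * (l * δ ^ 2) :=
          mul_le_mul_of_nonneg_right Real.pi_gt_three.le hld2pos.le
        rw [mul_assoc]
        linarith
      have hsd : (1 : ℝ) ≤ Real.sqrt (Real.pi * l) * δ := by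
        have heq : Real.sqrt (Real.pi * l * δ ^ 2) = Real.sqrt (Real.pi * l) * δ := by
          rw [Real.sqrt_mul (by positivity : (0 : ℝ) ≤ Real.pi * l), Real.sqrt_sq hδ.le]
        calc (1 : ℝ) = Real.sqrt 1 := Real.sqrt_one.symm
          _ ≤ Real.sqrt (Real.pi * l * δ ^ 2) := Real.sqrt_le_sqrt hpld
          _ = Real.sqrt (Real.pi * l) * δ := heq
      -- conclude
      have hkey := WeierstrassAux.key_estimate hl hδ hgd hgM hgderiv t
      have hNδ : N * δ = ε / 2 := by
        rw [hδdef]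
        field_simp
      have ht1 : 2 * M * Real.exp (-(l * δ ^ 2)) / (Real.sqrt (Real.pi * l) * δ)
          ≤ 2 * M * Real.exp (-(l * δ ^ 2)) :=
        div_le_self (by positivity) hsd
      have ht2 : 2 * M * Real.exp (-(l * δ ^ 2)) ≤ 2 * M * (ε ^ 2 / (8 * M ^ 2)) :=
        mul_le_mul_of_nonneg_left hexp (by positivity)
      have ht3 : 2 * M * (ε ^ 2 / (8 * M ^ 2)) ≤ ε / 2 := by
        rw [show 2 * M * (ε ^ 2 / (8 * M ^ 2)) = ε ^ 2 / (4 * M) by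
          field_simp; ring]
        rw [div_le_div_iff₀ (by positivity) (by norm_num)]
        nlinarith
      calc |weierstrassTransform l g t - g t|
          ≤ N * δ + 2 * M * Real.exp (-(l * δ ^ 2)) / (Real.sqrt (Real.pi * l) * δ) := hkey
        _ ≤ ε / 2 + ε / 2 := by rw [hNδ]; linarith
        _ = ε := by ring
  refine ⟨main, fun l hl2 k hk t => main l ?_ k hk t⟩
  rcases le_or_gt (Real.log (2 * Real.sqrt 2 * M / ε)) 0 with hL | hL
  · rw [max_eq_left hL, mul_zero]
    have h0 : (0 : ℝ) ≤ 16 * Real.sqrt 2 * (N / ε) ^ 3 := by positivity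
    linarith
  · rw [max_eq_right hL.le]
    have hargpos : (0 : ℝ) < 2 * Real.sqrt 2 * M / ε := by
      have hx0 : (0 : ℝ) ≤ 2 * Real.sqrt 2 * M / ε := by positivity
      rcases eq_or_lt_of_le hx0 with heq | hpos
      · rw [← heq, Real.log_zero] at hL
        exact absurd hL (lt_irrefl 0)
      · exact hpos
    have hlog_le : Real.log (2 * Real.sqrt 2 * M / ε) ≤ 2 * Real.sqrt 2 * M / ε := by
      have := Real.log_le_sub_one_of_pos hargpos
      linarith
    calc 8 * (N / ε) ^ 2 * Real.log (2 * Real.sqrt 2 * M / ε)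
        ≤ 8 * (N / ε) ^ 2 * (2 * Real.sqrt 2 * M / ε) :=
          mul_le_mul_of_nonneg_left hlog_le (by positivity)
      _ ≤ 8 * (N / ε) ^ 2 * (2 * Real.sqrt 2 * N / ε) := by
          have hsqrt2 : (0 : ℝ) ≤ Real.sqrt 2 := Real.sqrt_nonneg 2
          gcongr
      _ = 16 * Real.sqrt 2 * (N / ε) ^ 3 := by ring
      _ < l := by linarith
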